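/- Let a, b > 0 with a ≠ b, N ≥ 1, and let f, g : ℝ^N → ℝ be measurable functions with |f(x)| ≤ C₁ e^{−a|x|} and |g(x)| ≤ C₂ e^{−b|x|} for all x. Then there is a constant C (depending on a, b, N, C₁, C₂) such that for every ξ ∈ ℝ^N, ∫_{ℝ^N} |f(x) g(x − ξ)| dx ≤ C e^{−min{a,b}|ξ|}. -/

import Mathlib

noncomputable section
open Real MeasureTheory

lemma expInteraction_aux (N : ℕ) (ε : ℝ) (hε : 0 < ε) :
    Integrable (fun x : EuclideanSpace ℝ (Fin N) => Real.exp (-ε * ‖x‖)) := by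
  set n : ℕ := N + 1 with hn
  have hdim : (Module.finrank ℝ (EuclideanSpace ℝ (Fin N)) : ℝ) < (n : ℝ) := by
    simp [hn, finrank_euclideanSpace]
  have hint := (integrable_one_add_norm (E := EuclideanSpace ℝ (Fin N))
      (μ := volume) hdim).const_mul ((1 + n / ε) ^ n)
  refine hint.mono'
    ((Real.measurable_exp.comp (measurable_norm.const_mul (-ε))).aestronglyMeasurable)
    (Filter.Eventually.of_forall fun x => ?_)
  set t := ‖x‖ with ht
  have ht0 : 0 ≤ t := norm_nonneg x
  have h1 : 1 + t ≤ (1 + n / ε) * Real.exp (ε * t / n) := by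
    have h2 : ε * t / n + 1 ≤ Real.exp (ε * t / n) := Real.add_one_le_exp _
    have hn0 : (0:ℝ) < n := by positivity
    have h3 : (1 + n / ε) * (ε * t / n + 1) = 1 + ε * t / n + n / ε + t := by
      field_simp; ring
    nlinarith [mul_le_mul_of_nonneg_left h2 (by positivity : (0:ℝ) ≤ 1 + n / ε),
      div_nonneg (mul_nonneg hε.le ht0) hn0.le, div_nonneg hn0.le hε.le]
  have h1t : (0:ℝ) < 1 + t := by linarith
  have h4 : (1 + t) ^ n ≤ (1 + n / ε) ^ n * Real.exp (ε * t) := by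
    calc (1 + t) ^ n ≤ ((1 + n / ε) * Real.exp (ε * t / n)) ^ n :=
          pow_le_pow_left₀ (by linarith) h1 n
      _ = (1 + n / ε) ^ n * Real.exp (ε * t / n) ^ n := mul_pow _ _ _
      _ = (1 + n / ε) ^ n * Real.exp (ε * t) := by
          rw [← Real.exp_nat_mul]
          congr 1
          field_simp
          rw [mul_assoc, mul_div_cancel_left₀ _ (by positivity : (n:ℝ) ≠ 0)]
  have h5 : Real.exp (-ε * t) ≤ (1 + n / ε) ^ n * (1 + t) ^ (-(n:ℝ)) := by
    rw [Real.rpow_neg h1t.le, Real.rpow_natCast]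
    have hp : (0:ℝ) < (1 + t) ^ n := pow_pos h1t n
    rw [mul_comm ((1 + (n:ℝ) / ε) ^ n), inv_mul_eq_div, le_div_iff₀ hp]
    calc Real.exp (-ε * t) * (1 + t) ^ n
        ≤ Real.exp (-ε * t) * ((1 + n / ε) ^ n * Real.exp (ε * t)) :=
          mul_le_mul_of_nonneg_left h4 (Real.exp_nonneg _)
      _ = Real.exp (-ε * t) * Real.exp (ε * t) * (1 + n / ε) ^ n := by ring
      _ = (1 + n / ε) ^ n := by rw [← Real.exp_add]; simp
  simpa [abs_of_nonneg (Real.exp_nonneg _), mul_comm] using h5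

/-- the basic interaction estimate for exponentially decaying functions:
if `|f| ≤ C₁e^{-a|x|}` and `|g| ≤ C₂e^{-b|x|}` with `a ≠ b`, then
`∫ |f(x) g(x-ξ)| dx ≤ C e^{-min{a,b}|ξ|}`. -/
theorem expInteraction (N : ℕ) (hN : 1 ≤ N) (a b C₁ C₂ : ℝ)
    (ha : 0 < a) (hb : 0 < b) (hab : a ≠ b)
    (f g : EuclideanSpace ℝ (Fin N) → ℝ) (hf : Measurable f) (hg : Measurable g)
    (hfb : ∀ x, |f x| ≤ C₁ * Real.exp (-a * ‖x‖))
    (hgb : ∀ x, |g x| ≤ C₂ * Real.exp (-b * ‖x‖)) :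
    ∃ C : ℝ, ∀ ξ : EuclideanSpace ℝ (Fin N),
      (∫ x, |f x * g (x - ξ)|) ≤ C * Real.exp (-(min a b) * ‖ξ‖) := by
  set ε : ℝ := |a - b| with hε
  have hε0 : 0 < ε := abs_pos.mpr (sub_ne_zero.mpr hab)
  set m : ℝ := min a b with hm
  have hC₁ : 0 ≤ C₁ := by
    have := (abs_nonneg (f 0)).trans (hfb 0)
    simpa using this
  have hC₂ : 0 ≤ C₂ := by
    have := (abs_nonneg (g 0)).trans (hgb 0)
    simpa using this
  set K : ℝ := ∫ x : EuclideanSpace ℝ (Fin N), Real.exp (-ε * ‖x‖) with hK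
  refine ⟨C₁ * C₂ * (2 * K), fun ξ => ?_⟩
  have hint := expInteraction_aux N ε hε0
  have hint2 : Integrable (fun x : EuclideanSpace ℝ (Fin N) =>
      C₁ * C₂ * Real.exp (-m * ‖ξ‖) *
        (Real.exp (-ε * ‖x‖) + Real.exp (-ε * ‖x - ξ‖))) :=
    ((hint.add (hint.comp_sub_right ξ)).const_mul _)
  have key : ∀ x : EuclideanSpace ℝ (Fin N), |f x * g (x - ξ)| ≤
      C₁ * C₂ * Real.exp (-m * ‖ξ‖) *
        (Real.exp (-ε * ‖x‖) + Real.exp (-ε * ‖x - ξ‖)) := by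
    intro x
    set u := ‖x‖ with hu
    set v := ‖x - ξ‖ with hv
    have hu0 : 0 ≤ u := norm_nonneg _
    have hv0 : 0 ≤ v := norm_nonneg _
    have htri : ‖ξ‖ ≤ u + v := by
      have : ξ = x - (x - ξ) := by abel
      calc ‖ξ‖ = ‖x - (x - ξ)‖ := by rw [← this]
        _ ≤ ‖x‖ + ‖x - ξ‖ := norm_sub_le _ _
    have hexp : a * u + b * v ≥ m * ‖ξ‖ + ε * min u v := by
      rcases le_total a b with h | h <;>
        rcases le_total u v with h' | h' <;>
        simp only [hm, hε, min_eq_left, min_eq_right, h, h',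
          abs_of_nonneg, abs_of_nonpos, sub_nonneg.mpr, sub_nonpos.mpr] <;>
        nlinarith [mul_le_mul_of_nonneg_left htri ha.le,
          mul_le_mul_of_nonneg_left htri hb.le]
    calc |f x * g (x - ξ)| = |f x| * |g (x - ξ)| := abs_mul _ _
      _ ≤ (C₁ * Real.exp (-a * u)) * (C₂ * Real.exp (-b * v)) :=
          mul_le_mul (hfb x) (hgb (x - ξ)) (abs_nonneg _) (by positivity)
      _ = C₁ * C₂ * Real.exp (-(a * u + b * v)) := by
          rw [show -(a * u + b * v) = -a * u + (-b * v) by ring, Real.exp_add]; ring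
      _ ≤ C₁ * C₂ * (Real.exp (-m * ‖ξ‖) * Real.exp (-ε * min u v)) := by
          rw [← Real.exp_add]
          exact mul_le_mul_of_nonneg_left
            (Real.exp_le_exp.mpr (by linarith)) (by positivity)
      _ ≤ C₁ * C₂ * Real.exp (-m * ‖ξ‖) *
            (Real.exp (-ε * u) + Real.exp (-ε * v)) := by
          have hmin : Real.exp (-ε * min u v) ≤
              Real.exp (-ε * u) + Real.exp (-ε * v) := by
            rcases le_total u v with h' | h'
            · rw [min_eq_left h']
              nlinarith [Real.exp_pos (-ε * u), Real.exp_pos (-ε * v)]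
            · rw [min_eq_right h']
              nlinarith [Real.exp_pos (-ε * u), Real.exp_pos (-ε * v)]
          rw [← mul_assoc]
          exact mul_le_mul_of_nonneg_left hmin (by positivity)
  have hmono := integral_mono_of_nonneg
      (Filter.Eventually.of_forall fun x => abs_nonneg (f x * g (x - ξ)))
      hint2 (Filter.Eventually.of_forall key)
  refine hmono.trans (le_of_eq ?_)
  rw [integral_const_mul, integral_add hint (hint.comp_sub_right ξ)]
  rw [integral_sub_right_eq_self (fun x => Real.exp (-ε * ‖x‖)) ξ]
  ring
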